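/- Let T : [0,1] → [0,1] be Borel measurable with a T-invariant probability measure λ_T satisfying λ_T((0,1)) = 1, and let U₀ be a random variable with law λ_T. Let (x_t)_{t≥1} be a strictly stationary ℝ^l-valued process that is independent of U₀. Let g : (0,1) → ℝ be Borel measurable and injective with Borel measurable inverse on its image, let h : (0,1) → ℝ be Borel measurable, and let α ∈ ℝ, β ∈ ℝ^l. Assume that for every t ≥ 1, α + ⟨x_t, β⟩ + h(T^{t−1}(U₀)) lies in the image g((0,1)) almost surely, and set μ_t := g⁻¹(α + ⟨x_t, β⟩ + h(T^{t−1}(U₀))). Let ν > 0 and let Y = (Y_t)_{t≥1} have the βARC conditional structure with μ = (μ_t)_{t≥1} and precision ν. Then (Y_t)_{t≥1} is strictly stationary. -/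

import Mathlib

open MeasureTheory Set

/-- The density of the Beta(νz, ν(1-z)) distribution on (0,1), as in the paper. -/
noncomputable def betaDen (ν z y : ℝ) : ℝ :=
  Set.indicator (Set.Ioo 0 1)
    (fun y => Real.Gamma ν / (Real.Gamma (ν * z) * Real.Gamma (ν * (1 - z))) *
      y ^ (ν * z - 1) * (1 - y) ^ (ν * (1 - z) - 1)) y

/-- The Beta(νz, ν(1-z)) probability distribution on (0,1) (as a measure on ℝ). -/
noncomputable def betaMeas (ν z : ℝ) : Measure ℝ :=
  volume.withDensity (fun y => ENNReal.ofReal (betaDen ν z y))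

/-- Processes `Y` and `μ` taking values in `(0,1)` have the βARC conditional structure with
precision `ν`: for all distinct times and Borel sets `A j, B j ⊆ (0,1)`,
`P(∀j, Y (t j) ∈ A j, μ (t j) ∈ B j) = E[∏ j, 1_{B j}(μ (t j)) · Beta(ν μ, ν(1-μ))(A j)]`,
i.e. conditionally on `μ` the `Y`'s are independent with `Y t ∼ Beta(ν μ t, ν(1-μ t))`. -/
def IsBetaARC {Ω : Type*} [MeasurableSpace Ω] (P : Measure Ω) (ν : ℝ)
    (Y μ : ℕ → Ω → ℝ) : Prop :=
  (∀ t, Measurable (Y t)) ∧ (∀ t, Measurable (μ t)) ∧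
  (∀ t, ∀ᵐ ω ∂P, Y t ω ∈ Set.Ioo (0 : ℝ) 1) ∧
  (∀ t, ∀ᵐ ω ∂P, μ t ω ∈ Set.Ioo (0 : ℝ) 1) ∧
  ∀ (k : ℕ) (t : Fin k → ℕ), Function.Injective t →
    ∀ A B : Fin k → Set ℝ, (∀ j, MeasurableSet (A j)) → (∀ j, MeasurableSet (B j)) →
      (∀ j, A j ⊆ Set.Ioo 0 1) → (∀ j, B j ⊆ Set.Ioo 0 1) →
      P {ω | ∀ j, Y (t j) ω ∈ A j ∧ μ (t j) ω ∈ B j} =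
        ∫⁻ ω, ∏ j, ((B j).indicator 1 (μ (t j) ω) * betaMeas ν (μ (t j) ω) (A j)) ∂P

/-- Strict stationarity of a process: all finite-dimensional joint laws are shift invariant. -/
def StrictlyStationary {Ω E : Type*} [MeasurableSpace Ω] [MeasurableSpace E]
    (P : Measure Ω) (Z : ℕ → Ω → E) : Prop :=
  ∀ (k : ℕ) (t : Fin k → ℕ) (h : ℕ),
    Measure.map (fun ω => fun j => Z (t j + h) ω) P =
      Measure.map (fun ω => fun j => Z (t j) ω) P

lemma measurable_realGamma : Measurable Real.Gamma := by
  apply measurable_of_restrict_of_restrict_compl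
    (s := Set.range fun n : ℕ => -(n : ℝ)) (Set.countable_range _).measurableSet
  · have := (Set.countable_range fun n : ℕ => -(n : ℝ)).to_subtype
    exact measurable_of_countable _
  · refine (continuousOn_iff_continuous_restrict.mp fun x hx => ?_).measurable
    refine (Real.differentiableAt_Gamma fun m => ?_).continuousAt.continuousWithinAt
    exact fun hxm => hx ⟨m, hxm.symm⟩

lemma measurable_betaDen (ν : ℝ) : Measurable fun p : ℝ × ℝ => betaDen ν p.1 p.2 := by
  have heq : (fun p : ℝ × ℝ => betaDen ν p.1 p.2) = fun p =>
      if p.2 ∈ Set.Ioo (0:ℝ) 1 then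
        Real.Gamma ν / (Real.Gamma (ν * p.1) * Real.Gamma (ν * (1 - p.1))) *
          Real.exp (Real.log p.2 * (ν * p.1 - 1)) *
          Real.exp (Real.log (1 - p.2) * (ν * (1 - p.1) - 1))
      else 0 := by
    funext p
    by_cases hp : p.2 ∈ Set.Ioo (0:ℝ) 1
    · rw [betaDen, Set.indicator_of_mem hp, if_pos hp,
        Real.rpow_def_of_pos hp.1, Real.rpow_def_of_pos (by linarith [hp.2] : (0:ℝ) < 1 - p.2)]
    · rw [betaDen, Set.indicator_of_notMem hp, if_neg hp]
  rw [heq]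
  refine Measurable.ite (measurableSet_Ioo.preimage measurable_snd) ?_ measurable_const
  refine Measurable.mul (Measurable.mul ?_ ?_) ?_
  · exact (measurable_const.div ((measurable_realGamma.comp (measurable_const.mul measurable_fst)).mul
      (measurable_realGamma.comp (measurable_const.mul (measurable_const.sub measurable_fst)))))
  · exact Real.measurable_exp.comp ((Real.measurable_log.comp measurable_snd).mul
      ((measurable_const.mul measurable_fst).sub measurable_const))
  · exact Real.measurable_exp.comp ((Real.measurable_log.comp (measurable_const.sub measurable_snd)).mul
      ((measurable_const.mul (measurable_const.sub measurable_fst)).sub measurable_const))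

lemma measurable_betaMeas (ν : ℝ) {A : Set ℝ} (hA : MeasurableSet A) :
    Measurable fun z => betaMeas ν z A := by
  have heq : (fun z => betaMeas ν z A) =
      fun z => ∫⁻ y in A, ENNReal.ofReal (betaDen ν z y) := by
    funext z
    rw [betaMeas, withDensity_apply _ hA]
  rw [heq]
  exact Measurable.lintegral_prod_right
    (ENNReal.measurable_ofReal.comp (measurable_betaDen ν))

/-- **Corollary 5, βARC model with random covariates.** Let `T : [0,1] → [0,1]`
be Borel measurable with a `T`-invariant probability measure `lam` with `lam((0,1)) = 1`, and
let `U₀` have law `lam`.  Let `(x t)` be a strictly stationary `ℝ^l`-valued process independent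
of `U₀`.  Let `g : (0,1) → ℝ` be Borel measurable and injective with Borel measurable inverse
`ginv` on its image, `hfun : (0,1) → ℝ` Borel measurable, `α ∈ ℝ`, `β ∈ ℝ^l`.  Assume that for
every `t`, `α + ⟨x t, β⟩ + hfun (T^[t] U₀) ∈ g((0,1))` a.s., and set
`μ t := g⁻¹(α + ⟨x t, β⟩ + hfun (T^[t] U₀))`.  If `Y` has the βARC conditional structure with
`μ` and precision `ν > 0`, then `Y` is strictly stationary. -/
theorem stmt6 {Ω : Type*} [MeasurableSpace Ω] (P : Measure Ω) [IsProbabilityMeasure P]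
    (T : ℝ → ℝ) (hT : Measurable T) (hTmaps : Set.MapsTo T (Set.Icc 0 1) (Set.Icc 0 1))
    (lam : Measure ℝ) [IsProbabilityMeasure lam]
    (hinv : ∀ A : Set ℝ, MeasurableSet A → lam (T ⁻¹' A) = lam A)
    (h01 : lam (Set.Ioo 0 1) = 1)
    (U₀ : Ω → ℝ) (hU₀ : Measurable U₀) (hlaw : Measure.map U₀ P = lam)
    (l : ℕ) (x : ℕ → Ω → (Fin l → ℝ)) (hxmeas : ∀ t, Measurable (x t))
    (hxstat : StrictlyStationary P x)
    (hindep : ProbabilityTheory.IndepFun U₀ (fun ω => fun t => x t ω) P)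
    (g ginv hfun : ℝ → ℝ) (hg : Measurable g) (hginj : Set.InjOn g (Set.Ioo 0 1))
    (hginv : Measurable ginv) (hginvg : ∀ u ∈ Set.Ioo (0 : ℝ) 1, ginv (g u) = u)
    (hhfun : Measurable hfun) (α : ℝ) (β : Fin l → ℝ)
    (himg : ∀ t : ℕ, ∀ᵐ ω ∂P,
      α + (∑ i, x t ω i * β i) + hfun (T^[t] (U₀ ω)) ∈ g '' Set.Ioo 0 1)
    (ν : ℝ) (hν : 0 < ν) (Y μ : ℕ → Ω → ℝ)
    (hμ : ∀ t ω, μ t ω = ginv (α + (∑ i, x t ω i * β i) + hfun (T^[t] (U₀ ω))))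
    (hARC : IsBetaARC P ν Y μ) :
    StrictlyStationary P Y := by
  classical
  obtain ⟨hYmeas, hμmeas, hYmem, hμmem, hARCeq⟩ := hARC
  -- iterates measurable and `lam` invariant under iterates
  have hTit : ∀ n : ℕ, Measurable (T^[n]) := fun n => hT.iterate n
  have hmapT : Measure.map T lam = lam := by
    ext A hA
    rw [Measure.map_apply hT hA]
    exact hinv A hA
  have hmapTn : ∀ n : ℕ, Measure.map (T^[n]) lam = lam := by
    intro n
    induction n with
    | zero => simp [Measure.map_id]
    | succ n ih =>
      rw [Function.iterate_succ', ← Measure.map_map hT (hTit n), ih, hmapT]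
  -- μ is strictly stationary
  have hμstat : StrictlyStationary P μ := by
    intro r e h
    set Φ : ((Fin r → (Fin l → ℝ)) × (Fin r → ℝ)) → (Fin r → ℝ) :=
      fun p i => ginv (α + (∑ i', p.1 i i' * β i') + hfun (p.2 i)) with hΦdef
    have hΦmeas : Measurable Φ := by
      refine measurable_pi_lambda _ fun i => hginv.comp ?_
      refine Measurable.add (Measurable.add measurable_const ?_) (hhfun.comp ?_)
      · refine Finset.measurable_sum _ fun i' _ => ?_
        fun_prop
      · exact (measurable_pi_apply i).comp measurable_snd
    have key : ∀ s : Fin r → ℕ,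
        Measure.map (fun ω => fun i => μ (s i) ω) P =
          Measure.map Φ ((Measure.map (fun ω => fun i => x (s i) ω) P).prod
            (Measure.map (fun u => fun i => T^[s i] u) lam)) := by
      intro s
      have hXv : Measurable fun ω => fun i => x (s i) ω :=
        measurable_pi_lambda _ fun i => hxmeas (s i)
      have hUv' : Measurable fun u => fun i => T^[s i] u :=
        measurable_pi_lambda _ fun i => hTit (s i)
      have hUv : Measurable fun ω => fun i => T^[s i] (U₀ ω) := hUv'.comp hU₀
      have hfuneq : (fun ω => fun i => μ (s i) ω) =
          Φ ∘ (fun ω => ((fun i => x (s i) ω), (fun i => T^[s i] (U₀ ω)))) := by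
        funext ω
        funext i
        exact hμ (s i) ω
      have hind2 : ProbabilityTheory.IndepFun (fun ω => fun i => x (s i) ω)
          (fun ω => fun i => T^[s i] (U₀ ω)) P :=
        hindep.symm.comp (φ := fun f : ℕ → Fin l → ℝ => fun i => f (s i))
          (ψ := fun u => fun i => T^[s i] u)
          (measurable_pi_lambda _ fun i => measurable_pi_apply (s i)) hUv'
      have hpair := (ProbabilityTheory.indepFun_iff_map_prod_eq_prod_map_map
        hXv.aemeasurable hUv.aemeasurable).mp hind2
      have hUlaw : Measure.map (fun ω => fun i => T^[s i] (U₀ ω)) P =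
          Measure.map (fun u => fun i => T^[s i] u) lam := by
        rw [← hlaw, Measure.map_map hUv' hU₀]
        rfl
      rw [hfuneq, ← Measure.map_map hΦmeas (hXv.prodMk hUv), hpair, hUlaw]
    rw [key (fun i => e i + h), key e]
    congr 1
    congr 1
    · exact hxstat r e h
    · have hcomp : (fun u => fun i => T^[e i + h] u) =
          (fun u => fun i => T^[e i] u) ∘ T^[h] := by
        funext u
        funext i
        exact Function.iterate_add_apply T (e i) h u
      rw [hcomp, ← Measure.map_map (measurable_pi_lambda _ fun i => hTit (e i)) (hTit h),
        hmapTn h]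
  -- now the main argument
  intro k t h
  have hYvec : ∀ s : Fin k → ℕ, Measurable fun ω => fun j : Fin k => Y (s j) ω :=
    fun s => measurable_pi_lambda _ fun j => hYmeas (s j)
  haveI hpm1 : IsProbabilityMeasure (Measure.map (fun ω => fun j : Fin k => Y (t j + h) ω) P) :=
    Measure.isProbabilityMeasure_map (hYvec _).aemeasurable
  haveI hpm2 : IsProbabilityMeasure (Measure.map (fun ω => fun j : Fin k => Y (t j) ω) P) :=
    Measure.isProbabilityMeasure_map (hYvec _).aemeasurable
  refine ext_of_generate_finite _ generateFrom_pi.symm isPiSystem_pi ?_ (by simp)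
  rintro _ ⟨A, hA, rfl⟩
  have hAm : ∀ j, MeasurableSet (A j) := fun j => hA j (Set.mem_univ j)
  have hpiA : MeasurableSet (Set.pi Set.univ A) :=
    MeasurableSet.pi Set.countable_univ fun j _ => hAm j
  rw [Measure.map_apply (hYvec _) hpiA, Measure.map_apply (hYvec _) hpiA]
  have hpre : ∀ s : Fin k → ℕ, (fun ω => fun j : Fin k => Y (s j) ω) ⁻¹' (Set.pi Set.univ A)
      = {ω | ∀ j, Y (s j) ω ∈ A j} := by
    intro s
    ext ω
    simp [Set.mem_pi]
  rw [hpre, hpre]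
  -- replace each `A j` by its intersection with (0,1)
  set A' : Fin k → Set ℝ := fun j => A j ∩ Set.Ioo 0 1 with hA'def
  have hA'meas : ∀ j, MeasurableSet (A' j) := fun j => (hAm j).inter measurableSet_Ioo
  have hA'sub : ∀ j, A' j ⊆ Set.Ioo 0 1 := fun j => Set.inter_subset_right
  have hstep1 : ∀ s : Fin k → ℕ,
      P {ω | ∀ j, Y (s j) ω ∈ A j} = P {ω | ∀ j, Y (s j) ω ∈ A' j} := by
    intro s
    refine measure_congr ?_
    have hae : ∀ᵐ ω ∂P, ∀ j : Fin k, Y (s j) ω ∈ Set.Ioo (0:ℝ) 1 :=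
      ae_all_iff.mpr fun j => hYmem (s j)
    filter_upwards [hae] with ω hω
    show (∀ j, Y (s j) ω ∈ A j) = (∀ j, Y (s j) ω ∈ A' j)
    rw [eq_iff_iff]
    exact ⟨fun hj j => ⟨hj j, hω j⟩, fun hj j => (hj j).1⟩
  rw [hstep1 (fun j => t j + h), hstep1 t]
  -- deduplicate the times
  set S : Finset ℕ := Finset.image t Finset.univ with hSdef
  set r : ℕ := S.card with hrdef
  set e : Fin r → ℕ := fun i => ((S.equivFin.symm i : S) : ℕ) with hedef
  have he_inj : Function.Injective e := by
    intro i i' hii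
    exact S.equivFin.symm.injective (Subtype.ext hii)
  have he_mem : ∀ j : Fin k, ∃ i, e i = t j := by
    intro j
    have htj : t j ∈ S := Finset.mem_image_of_mem t (Finset.mem_univ j)
    refine ⟨S.equivFin ⟨t j, htj⟩, ?_⟩
    simp [hedef]
  set C : Fin r → Set ℝ := fun i => ⋂ (j : Fin k) (_ : t j = e i), A' j with hCdef
  have hCmeas : ∀ i, MeasurableSet (C i) :=
    fun i => MeasurableSet.iInter fun j => MeasurableSet.iInter fun _ => hA'meas j
  have hCsub : ∀ i, C i ⊆ Set.Ioo 0 1 := by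
    intro i
    have hei : (e i) ∈ S := (S.equivFin.symm i).2
    obtain ⟨j, _, hj⟩ := Finset.mem_image.mp hei
    refine Set.Subset.trans ?_ (hA'sub j)
    intro y hy
    exact Set.mem_iInter.mp (Set.mem_iInter.mp hy j) hj
  have hsetid : ∀ h' : ℕ,
      {ω | ∀ j, Y (t j + h') ω ∈ A' j} = {ω | ∀ i, Y (e i + h') ω ∈ C i} := by
    intro h'
    ext ω
    simp only [Set.mem_setOf_eq]
    constructor
    · intro hj i
      refine Set.mem_iInter.mpr fun j => Set.mem_iInter.mpr fun hji => ?_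
      rw [← hji]
      exact hj j
    · intro hi j
      obtain ⟨i, hi'⟩ := he_mem j
      have hmem := Set.mem_iInter.mp (Set.mem_iInter.mp (hi i) j) hi'.symm
      rw [← hi']
      exact hmem
  set F : (Fin r → ℝ) → ENNReal := fun v =>
    ∏ i, (Set.indicator (Set.Ioo 0 1) 1 (v i) * betaMeas ν (v i) (C i)) with hFdef
  have hFmeas : Measurable F := by
    refine Finset.measurable_prod _ fun i _ => Measurable.mul ?_ ?_
    · exact (measurable_one.indicator measurableSet_Ioo).comp (measurable_pi_apply i)
    · exact (measurable_betaMeas ν (hCmeas i)).comp (measurable_pi_apply i)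
  have hbig : ∀ h' : ℕ, P {ω | ∀ j, Y (t j + h') ω ∈ A' j}
      = ∫⁻ v, F v ∂(Measure.map (fun ω => fun i => μ (e i + h') ω) P) := by
    intro h'
    have he'_inj : Function.Injective fun i => e i + h' := fun i i' hii =>
      he_inj (Nat.add_right_cancel hii)
    have harc := hARCeq r (fun i => e i + h') he'_inj C (fun _ => Set.Ioo 0 1) hCmeas
      (fun _ => measurableSet_Ioo) hCsub (fun _ => le_refl _)
    have haeμ : ∀ᵐ ω ∂P, ∀ i : Fin r, μ (e i + h') ω ∈ Set.Ioo (0:ℝ) 1 :=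
      ae_all_iff.mpr fun i => hμmem _
    have h1 : P {ω | ∀ j, Y (t j + h') ω ∈ A' j} =
        P {ω | ∀ i, Y (e i + h') ω ∈ C i ∧ μ (e i + h') ω ∈ Set.Ioo 0 1} := by
      rw [hsetid h']
      refine measure_congr ?_
      filter_upwards [haeμ] with ω hω
      show (∀ i, Y (e i + h') ω ∈ C i) = (∀ i, Y (e i + h') ω ∈ C i ∧ μ (e i + h') ω ∈ Set.Ioo 0 1)
      rw [eq_iff_iff]
      exact ⟨fun hi i => ⟨hi i, hω i⟩, fun hi i => (hi i).1⟩
    have hμvec : Measurable fun ω => fun i : Fin r => μ (e i + h') ω :=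
      measurable_pi_lambda _ fun i => hμmeas _
    rw [h1, harc, lintegral_map hFmeas hμvec]
  rw [hbig h, hμstat r e h]
  have hbig0 := hbig 0
  simp only [Nat.add_zero] at hbig0
  exact hbig0.symm
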